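/- arXiv:2207.06357 — 4 statements merged into one kernel-verified Lean document; each statement's English description precedes it below -/
import Mathlib

section
/- If Δ = E‖Ĉ − C‖² > 0 and ‖C − f*‖ > 0, then the function α ↦ E‖(1−α)Ĉ + αf* − C‖² (where Ĉ is an unbiased estimator of C in a Hilbert space) is strictly less than Δ if and only if α ∈ (0, 2Δ/(Δ + ‖C − f*‖²)), and is minimized at α* = Δ/(Δ + ‖C − f*‖²). -/
open MeasureTheory

/-- If `Δ = E‖Ĉ − C‖² > 0` and `‖C − f*‖ > 0`, then the risk
`α ↦ E‖(1−α)Ĉ + αf* − C‖²` is strictly less than `Δ` iff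
`α ∈ (0, 2Δ/(Δ + ‖C − f*‖²))`, and it is minimized at
`α* = Δ/(Δ + ‖C − f*‖²)`. -/
theorem risk_lt_iff_and_min
    {Ω H : Type*} [MeasurableSpace Ω]
    [NormedAddCommGroup H] [InnerProductSpace ℝ H] [CompleteSpace H]
    (P : Measure Ω) [IsProbabilityMeasure P]
    (Chat : Ω → H) (C fstar : H)
    (hInt : Integrable Chat P)
    (hUnbiased : ∫ ω, Chat ω ∂P = C)
    (hSq : Integrable (fun ω => ‖Chat ω - C‖ ^ 2) P)
    (hΔpos : 0 < ∫ ω, ‖Chat ω - C‖ ^ 2 ∂P)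
    (hCf : 0 < ‖C - fstar‖) :
    (∀ α : ℝ,
      (∫ ω, ‖(1 - α) • Chat ω + α • fstar - C‖ ^ 2 ∂P) < ∫ ω, ‖Chat ω - C‖ ^ 2 ∂P ↔
        α ∈ Set.Ioo (0 : ℝ)
          (2 * (∫ ω, ‖Chat ω - C‖ ^ 2 ∂P)
            / ((∫ ω, ‖Chat ω - C‖ ^ 2 ∂P) + ‖C - fstar‖ ^ 2))) ∧
    (∀ α : ℝ,
      (∫ ω, ‖(1 - ((∫ ω, ‖Chat ω - C‖ ^ 2 ∂P)
          / ((∫ ω, ‖Chat ω - C‖ ^ 2 ∂P) + ‖C - fstar‖ ^ 2))) • Chat ω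
          + ((∫ ω, ‖Chat ω - C‖ ^ 2 ∂P)
          / ((∫ ω, ‖Chat ω - C‖ ^ 2 ∂P) + ‖C - fstar‖ ^ 2)) • fstar - C‖ ^ 2 ∂P)
        ≤ ∫ ω, ‖(1 - α) • Chat ω + α • fstar - C‖ ^ 2 ∂P) := by
  set Δ := ∫ ω, ‖Chat ω - C‖ ^ 2 ∂P with hΔdef
  set B := ‖C - fstar‖ ^ 2 with hBdef
  have hBpos : 0 < B := by positivity
  have hsub : Integrable (fun ω => Chat ω - C) P := hInt.sub (integrable_const C)
  have hzero : ∫ ω, (Chat ω - C) ∂P = 0 := by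
    rw [integral_sub hInt (integrable_const C), hUnbiased, integral_const]
    simp
  have hcross : ∫ ω, (inner ℝ (Chat ω - C) (fstar - C) : ℝ) ∂P = 0 := by
    have h : ∀ ω, (inner ℝ (Chat ω - C) (fstar - C) : ℝ)
        = inner ℝ (fstar - C) (Chat ω - C) := fun ω => real_inner_comm _ _
    simp_rw [h]
    rw [integral_inner hsub, hzero, inner_zero_right]
  have key : ∀ α : ℝ, (∫ ω, ‖(1 - α) • Chat ω + α • fstar - C‖ ^ 2 ∂P)
      = (1 - α) ^ 2 * Δ + α ^ 2 * B := by
    intro α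
    have h2 : ∀ ω, ‖(1 - α) • Chat ω + α • fstar - C‖ ^ 2
        = (1 - α) ^ 2 * ‖Chat ω - C‖ ^ 2
          + (2 * (1 - α) * α) * (inner ℝ (Chat ω - C) (fstar - C) : ℝ)
          + α ^ 2 * ‖fstar - C‖ ^ 2 := by
      intro ω
      have h1 : (1 - α) • Chat ω + α • fstar - C
          = (1 - α) • (Chat ω - C) + α • (fstar - C) := by
        simp [smul_sub, sub_smul]; abel
      rw [h1, norm_add_sq_real, norm_smul, norm_smul, real_inner_smul_left,
        real_inner_smul_right, mul_pow, mul_pow, Real.norm_eq_abs, Real.norm_eq_abs,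
        sq_abs, sq_abs]
      ring
    simp_rw [h2]
    have hI2 : Integrable (fun ω => 2 * (1 - α) * α *
        (inner ℝ (Chat ω - C) (fstar - C) : ℝ)) P :=
      (hsub.inner_const _).const_mul _
    have hI1 : Integrable (fun ω => (1 - α) ^ 2 * ‖Chat ω - C‖ ^ 2) P :=
      hSq.const_mul _
    have hI12 : Integrable (fun ω => (1 - α) ^ 2 * ‖Chat ω - C‖ ^ 2
        + 2 * (1 - α) * α * (inner ℝ (Chat ω - C) (fstar - C) : ℝ)) P := hI1.add hI2
    rw [integral_add hI12 (integrable_const _), integral_add hI1 hI2,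
      integral_const_mul, integral_const_mul, hcross, integral_const]
    simp [hBdef, norm_sub_rev C fstar, hΔdef]
  have hspos : 0 < Δ + B := by linarith
  constructor
  · intro α
    rw [key α]
    constructor
    · intro h
      have hα : 0 < α := by nlinarith [sq_nonneg α]
      refine ⟨hα, ?_⟩
      rw [lt_div_iff₀ hspos]
      nlinarith
    · rintro ⟨h1, h2⟩
      rw [lt_div_iff₀ hspos] at h2
      nlinarith
  · intro α
    rw [key α, key (Δ / (Δ + B))]
    have hval : (1 - Δ / (Δ + B)) ^ 2 * Δ + (Δ / (Δ + B)) ^ 2 * B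
        = Δ * B / (Δ + B) := by
      field_simp
      ring
    rw [hval, div_le_iff₀ hspos]
    nlinarith [sq_nonneg ((Δ + B) * α - Δ)]
end

section
/- Let X₁,…,Xₙ be vectors in ℝ^d, X̄ = (1/n)∑Xᵢ, X̃ᵢ = Xᵢ − X̄, and Σ̂ = (1/n)∑X̃ᵢX̃ᵢᵀ. Then ∑_{i,j=1}^n ⟨Xᵢ − Xⱼ, Xᵢ − Xⱼ⟩² = 2n ∑_{i=1}^n ‖X̃ᵢ‖⁴ + 4n² Tr(Σ̂²) + 2n² (Tr Σ̂)². -/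
open Finset

/-- The sample mean of vectors `X₁, …, Xₙ` in `ℝ^d`. -/
noncomputable def sampleMean (n d : ℕ) (X : Fin n → EuclideanSpace ℝ (Fin d)) :
    EuclideanSpace ℝ (Fin d) :=
  (n : ℝ)⁻¹ • ∑ i, X i

/-- The empirical covariance matrix `Σ̂ = (1/n) ∑ᵢ X̃ᵢ X̃ᵢᵀ`. -/
noncomputable def empCov (n d : ℕ) (X : Fin n → EuclideanSpace ℝ (Fin d)) :
    Matrix (Fin d) (Fin d) ℝ :=
  (n : ℝ)⁻¹ • ∑ i, Matrix.of (fun a b =>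
    (X i - sampleMean n d X) a * (X i - sampleMean n d X) b)

/-- Lemma B.1 (i):
`∑_{i,j} ⟨Xᵢ − Xⱼ, Xᵢ − Xⱼ⟩² = 2n ∑ᵢ ‖X̃ᵢ‖⁴ + 4n² Tr(Σ̂²) + 2n² (Tr Σ̂)²`. -/
theorem sum_sq_inner_self (n d : ℕ) (hn : 0 < n) (X : Fin n → EuclideanSpace ℝ (Fin d)) :
    ∑ i, ∑ j, (inner ℝ (X i - X j) (X i - X j) : ℝ) ^ 2
      = 2 * n * ∑ i, ‖X i - sampleMean n d X‖ ^ 4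
        + 4 * (n : ℝ) ^ 2 * (empCov n d X * empCov n d X).trace
        + 2 * (n : ℝ) ^ 2 * (empCov n d X).trace ^ 2 := by
  have hn' : (n : ℝ) ≠ 0 := Nat.cast_ne_zero.mpr hn.ne'
  set Y : Fin n → EuclideanSpace ℝ (Fin d) := fun i => X i - sampleMean n d X with hY
  set b : Fin n → Fin n → ℝ := fun i j => inner ℝ (Y i) (Y j) with hb
  -- the centered vectors sum to zero
  have hsumY : ∑ i, Y i = 0 := by
    simp only [hY, Finset.sum_sub_distrib, sampleMean, Finset.sum_const, card_univ,
      Fintype.card_fin]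
    rw [← Nat.cast_smul_eq_nsmul ℝ, smul_smul, mul_inv_cancel₀ hn', one_smul, sub_self]
  have hrow : ∀ i, ∑ j, b i j = 0 := by
    intro i
    simp only [hb]
    rw [← inner_sum, hsumY, inner_zero_right]
  have hcol : ∀ j, ∑ i, b i j = 0 := by
    intro j
    simp only [hb]
    rw [← sum_inner, hsumY, inner_zero_left]
  have hbdef : ∀ i j, b i j = ∑ a, Y i a * Y j a := by
    intro i j
    simp [hb, PiLp.inner_apply, RCLike.inner_apply, conj_trivial]
    exact Finset.sum_congr rfl fun _ _ => mul_comm _ _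
  -- the LHS in terms of b
  have h1 : ∀ i j, (inner ℝ (X i - X j) (X i - X j) : ℝ) = b i i - 2 * b i j + b j j := by
    intro i j
    have hXY : X i - X j = Y i - Y j := by simp [hY]
    rw [hXY]
    simp only [hb, inner_sub_left, inner_sub_right]
    have : (inner ℝ (Y j) (Y i) : ℝ) = inner ℝ (Y i) (Y j) := real_inner_comm _ _
    rw [this]; ring
  have hLHS : ∑ i, ∑ j, (inner ℝ (X i - X j) (X i - X j) : ℝ) ^ 2
      = 2 * n * ∑ i, b i i ^ 2 + 4 * ∑ i, ∑ j, b i j ^ 2 + 2 * (∑ i, b i i) ^ 2 := by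
    have expand : ∀ i j, (inner ℝ (X i - X j) (X i - X j) : ℝ) ^ 2
        = b i i ^ 2 + b j j ^ 2 + 4 * b i j ^ 2 + 2 * (b i i * b j j)
          - 4 * (b i i * b i j) - 4 * (b j j * b i j) := by
      intro i j; rw [h1]; ring
    calc ∑ i, ∑ j, (inner ℝ (X i - X j) (X i - X j) : ℝ) ^ 2
        = ∑ i, ∑ j, (b i i ^ 2 + b j j ^ 2 + 4 * b i j ^ 2 + 2 * (b i i * b j j)
            - 4 * (b i i * b i j) - 4 * (b j j * b i j)) := by
          exact Finset.sum_congr rfl fun i _ => Finset.sum_congr rfl fun j _ => expand i j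
      _ = 2 * n * ∑ i, b i i ^ 2 + 4 * ∑ i, ∑ j, b i j ^ 2 + 2 * (∑ i, b i i) ^ 2 := by
          simp only [Finset.sum_add_distrib, Finset.sum_sub_distrib, Finset.sum_const,
            card_univ, Fintype.card_fin, ← Finset.mul_sum, nsmul_eq_mul]
          have e4 : ∑ i, b i i * ∑ j, b i j = 0 := by
            simp only [hrow, mul_zero, Finset.sum_const_zero]
          have e5 : ∑ i, ∑ j, b j j * b i j = 0 := by
            rw [Finset.sum_comm]
            simp only [← Finset.mul_sum]
            simp only [hcol, mul_zero, Finset.sum_const_zero]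
          rw [e5] at *
          have e3 : ∑ i, b i i * ∑ j, b j j = (∑ i, b i i) ^ 2 := by
            rw [← Finset.sum_mul, sq]
          rw [e4, e3]
          ring
  -- trace of Σ̂
  have hM : ∀ a c, empCov n d X a c = (n : ℝ)⁻¹ * ∑ i, Y i a * Y i c := by
    intro a c
    simp [empCov, hY, Matrix.sum_apply]
  have htr : (empCov n d X).trace = (n : ℝ)⁻¹ * ∑ i, b i i := by
    simp only [Matrix.trace, Matrix.diag, hM, ← Finset.mul_sum]
    rw [Finset.sum_comm]
    simp only [← hbdef]
  have htr2 : (empCov n d X * empCov n d X).trace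
      = (n : ℝ)⁻¹ * (n : ℝ)⁻¹ * ∑ i, ∑ j, b i j ^ 2 := by
    simp only [Matrix.trace, Matrix.diag, Matrix.mul_apply, hM]
    have hmul : ∀ a c : Fin d, ((n : ℝ)⁻¹ * ∑ i, Y i a * Y i c) * ((n : ℝ)⁻¹ * ∑ i, Y i c * Y i a)
        = (n : ℝ)⁻¹ * (n : ℝ)⁻¹ * ((∑ i, Y i a * Y i c) * ∑ i, Y i c * Y i a) := fun a c => by
      ring
    simp only [hmul, ← Finset.mul_sum]
    congr 1
    -- goal: ∑ a, ∑ c, (∑ i, Y i a * Y i c) * ∑ i, Y i c * Y i a = ∑ i, ∑ j, b i j ^ 2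
    have step : ∀ a c : Fin d, (∑ i, Y i a * Y i c) * ∑ i, Y i c * Y i a
        = ∑ i, ∑ j, (Y i a * Y j a) * (Y i c * Y j c) := by
      intro a c
      rw [Finset.sum_mul_sum]
      exact Finset.sum_congr rfl fun i _ => Finset.sum_congr rfl fun j _ => by ring
    calc ∑ a, ∑ c, (∑ i, Y i a * Y i c) * ∑ i, Y i c * Y i a
        = ∑ a, ∑ c, ∑ i, ∑ j, (Y i a * Y j a) * (Y i c * Y j c) := by
          exact Finset.sum_congr rfl fun a _ => Finset.sum_congr rfl fun c _ => step a c
      _ = ∑ a, ∑ i, ∑ c, ∑ j, (Y i a * Y j a) * (Y i c * Y j c) :=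
          Finset.sum_congr rfl fun a _ => Finset.sum_comm
      _ = ∑ a, ∑ i, ∑ j, ∑ c, (Y i a * Y j a) * (Y i c * Y j c) :=
          Finset.sum_congr rfl fun a _ => Finset.sum_congr rfl fun i _ =>
            Finset.sum_comm
      _ = ∑ i, ∑ a, ∑ j, ∑ c, (Y i a * Y j a) * (Y i c * Y j c) :=
          Finset.sum_comm
      _ = ∑ i, ∑ j, ∑ a, ∑ c, (Y i a * Y j a) * (Y i c * Y j c) :=
          Finset.sum_congr rfl fun i _ => Finset.sum_comm
      _ = ∑ i, ∑ j, b i j ^ 2 := by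
          refine Finset.sum_congr rfl fun i _ => Finset.sum_congr rfl fun j _ => ?_
          rw [hbdef, sq, Finset.sum_mul_sum]
  -- norms
  have hnorm : ∀ i, ‖X i - sampleMean n d X‖ ^ 4 = b i i ^ 2 := by
    intro i
    have : b i i = ‖Y i‖ ^ 2 := real_inner_self_eq_norm_sq (Y i)
    rw [show ‖X i - sampleMean n d X‖ = ‖Y i‖ from by rw [hY], this]
    ring
  rw [hLHS, htr, htr2]
  simp only [hnorm]
  field_simp
end

section
/- Let X₁,…,Xₙ ∈ ℝ^d with X̄, X̃ᵢ, Σ̂ as defined. Then ∑_{i,j,l=1}^n ⟨Xᵢ − Xⱼ, Xᵢ − X_l⟩² = n² ∑_{i=1}^n ‖X̃ᵢ‖⁴ + 3n³ Tr(Σ̂²). -/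
open Finset

lemma key_sum (n : ℕ) (a : Fin n → Fin n → ℝ)
    (hsymm : ∀ i j, a i j = a j i) (hsum : ∀ i, ∑ j, a i j = 0) :
    ∑ i, ∑ j, ∑ l, (a i i - a i l - a i j + a j l) ^ 2
      = (n : ℝ) ^ 2 * ∑ i, (a i i) ^ 2 + 3 * n * ∑ i, ∑ j, (a i j) ^ 2 := by
  have hsum' : ∀ l, ∑ j, a j l = 0 := fun l => by
    rw [Finset.sum_congr rfl fun j _ => hsymm j l]; exact hsum l
  have h1 : ∀ i j : Fin n, ∑ l, (a i i - a i l - a i j + a j l) ^ 2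
      = (n : ℝ) * (a i i - a i j) ^ 2 + ∑ l, (a i l) ^ 2 + ∑ l, (a j l) ^ 2
        - 2 * ∑ l, a i l * a j l := by
    intro i j
    rw [Finset.sum_congr rfl fun l _ => show (a i i - a i l - a i j + a j l) ^ 2
        = (a i i - a i j) ^ 2 + (a i l) ^ 2 + (a j l) ^ 2
          - (2 * (a i i - a i j)) * a i l + (2 * (a i i - a i j)) * a j l
          - 2 * (a i l * a j l) from by ring]
    simp only [Finset.sum_add_distrib, Finset.sum_sub_distrib, ← Finset.mul_sum,
      Finset.sum_const, Finset.card_univ, Fintype.card_fin, nsmul_eq_mul, hsum,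
      mul_zero, sub_zero, add_zero]
  have hcross : ∀ i : Fin n, ∑ j, ∑ l, a i l * a j l = 0 := by
    intro i
    rw [Finset.sum_comm]
    refine Finset.sum_eq_zero fun l _ => ?_
    rw [← Finset.mul_sum, hsum' l, mul_zero]
  have h2 : ∀ i : Fin n, ∑ j, ∑ l, (a i i - a i l - a i j + a j l) ^ 2
      = (n : ℝ) ^ 2 * (a i i) ^ 2 + 2 * n * ∑ l, (a i l) ^ 2
        + ∑ j, ∑ l, (a j l) ^ 2 := by
    intro i
    rw [Finset.sum_congr rfl fun j _ => h1 i j]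
    have expand : ∀ j, (n : ℝ) * (a i i - a i j) ^ 2 + ∑ l, (a i l) ^ 2 + ∑ l, (a j l) ^ 2
        - 2 * ∑ l, a i l * a j l
        = ((n : ℝ) * (a i i) ^ 2 + ∑ l, (a i l) ^ 2) + (n : ℝ) * (a i j) ^ 2
          - (2 * n * a i i) * a i j + ∑ l, (a j l) ^ 2 - 2 * ∑ l, a i l * a j l := by
      intro j; ring
    rw [Finset.sum_congr rfl fun j _ => expand j]
    simp only [Finset.sum_add_distrib, Finset.sum_sub_distrib, ← Finset.mul_sum,
      Finset.sum_const, Finset.card_univ, Fintype.card_fin, nsmul_eq_mul, hsum,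
      mul_zero, sub_zero, hcross i]
    have : ∑ j, (a i j) ^ 2 = ∑ l, (a i l) ^ 2 := rfl
    rw [this]
    ring
  rw [Finset.sum_congr rfl fun i _ => h2 i]
  simp only [Finset.sum_add_distrib, ← Finset.mul_sum, Finset.sum_const,
    Finset.card_univ, Fintype.card_fin, nsmul_eq_mul]
  ring

lemma trace_aux (n d : ℕ) (Y : Fin n → EuclideanSpace ℝ (Fin d)) :
    ((((n : ℝ)⁻¹ • ∑ i, Matrix.of (fun a b => Y i a * Y i b)) *
      ((n : ℝ)⁻¹ • ∑ i, Matrix.of (fun a b => Y i a * Y i b))) :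
        Matrix (Fin d) (Fin d) ℝ).trace
      = (n : ℝ)⁻¹ * (n : ℝ)⁻¹ * ∑ i, ∑ j, (inner ℝ (Y i) (Y j) : ℝ) ^ 2 := by
  have hinner : ∀ i j : Fin n, (inner ℝ (Y i) (Y j) : ℝ) = ∑ a, Y i a * Y j a := by
    intro i j
    simp [PiLp.inner_apply, RCLike.inner_apply, mul_comm]
  have hM : ∀ i j : Fin n,
      ((Matrix.of (fun a b => Y i a * Y i b) * Matrix.of (fun a b => Y j a * Y j b)) :
        Matrix (Fin d) (Fin d) ℝ).trace = (inner ℝ (Y i) (Y j) : ℝ) ^ 2 := by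
    intro i j
    simp only [Matrix.trace, Matrix.diag, Matrix.mul_apply, Matrix.of_apply, hinner, pow_two,
      Finset.sum_mul_sum]
    refine Finset.sum_congr rfl fun a _ => Finset.sum_congr rfl fun b _ => by ring
  rw [smul_mul_assoc, Matrix.mul_smul, Matrix.sum_mul, smul_smul, Matrix.trace_smul]
  rw [Finset.sum_congr rfl fun i _ => Matrix.mul_sum (Finset.univ) _ _]
  rw [Matrix.trace_sum]
  rw [Finset.sum_congr rfl fun i _ => Matrix.trace_sum _ _]
  simp only [hM, smul_eq_mul]

lemma inner_sub_sub (d : ℕ) (u v w : EuclideanSpace ℝ (Fin d)) :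
    (inner ℝ (u - v) (u - w) : ℝ)
      = inner ℝ u u - inner ℝ u w - inner ℝ v u + inner ℝ v w := by
  rw [inner_sub_left, inner_sub_right, inner_sub_right]
  ring

/-- Lemma B.1 (ii):
`∑_{i,j,l} ⟨Xᵢ − Xⱼ, Xᵢ − X_l⟩² = n² ∑ᵢ ‖X̃ᵢ‖⁴ + 3n³ Tr(Σ̂²)`. -/
theorem sum_sq_inner_three (n d : ℕ) (hn : 0 < n) (X : Fin n → EuclideanSpace ℝ (Fin d)) :
    ∑ i, ∑ j, ∑ l, (inner ℝ (X i - X j) (X i - X l) : ℝ) ^ 2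
      = (n : ℝ) ^ 2 * ∑ i, ‖X i - sampleMean n d X‖ ^ 4
        + 3 * (n : ℝ) ^ 3 * (empCov n d X * empCov n d X).trace := by
  have hn' : (n : ℝ) ≠ 0 := Nat.cast_ne_zero.mpr hn.ne'
  set Y : Fin n → EuclideanSpace ℝ (Fin d) := fun i => X i - sampleMean n d X with hY
  have hYsum : ∑ i, Y i = 0 := by
    simp only [hY, Finset.sum_sub_distrib, Finset.sum_const, Finset.card_univ,
      Fintype.card_fin, sampleMean]
    rw [← Nat.cast_smul_eq_nsmul ℝ, smul_smul, mul_inv_cancel₀ hn', one_smul, sub_self]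
  have hsum : ∀ i, ∑ j, (inner ℝ (Y i) (Y j) : ℝ) = 0 := fun i => by
    rw [← inner_sum, hYsum, inner_zero_right]
  have hsymm : ∀ i j, (inner ℝ (Y i) (Y j) : ℝ) = inner ℝ (Y j) (Y i) := fun i j =>
    real_inner_comm _ _
  have hinner : ∀ i j l : Fin n, (inner ℝ (X i - X j) (X i - X l) : ℝ)
      = inner ℝ (Y i) (Y i) - inner ℝ (Y i) (Y l) - inner ℝ (Y i) (Y j) + inner ℝ (Y j) (Y l) := by
    intro i j l
    have h1 : X i - X j = Y i - Y j := by simp [hY]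
    have h2 : X i - X l = Y i - Y l := by simp [hY]
    rw [h1, h2, inner_sub_sub d (Y i) (Y j) (Y l), real_inner_comm (Y j) (Y i)]
  have hnorm : ∀ i, ‖X i - sampleMean n d X‖ ^ 4 = (inner ℝ (Y i) (Y i) : ℝ) ^ 2 := fun i => by
    rw [show (X i - sampleMean n d X) = Y i from rfl, real_inner_self_eq_norm_sq]
    ring
  have hcov : empCov n d X = (n : ℝ)⁻¹ • ∑ i, Matrix.of (fun a b => Y i a * Y i b) := by
    rw [empCov]
  have step1 : ∑ i, ∑ j, ∑ l, (inner ℝ (X i - X j) (X i - X l) : ℝ) ^ 2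
      = ∑ i, ∑ j, ∑ l, ((inner ℝ (Y i) (Y i) : ℝ) - inner ℝ (Y i) (Y l)
          - inner ℝ (Y i) (Y j) + inner ℝ (Y j) (Y l)) ^ 2 := by
    refine Finset.sum_congr rfl fun i _ => Finset.sum_congr rfl fun j _ =>
      Finset.sum_congr rfl fun l _ => by rw [hinner]
  have step2 := key_sum n (fun i j => (inner ℝ (Y i) (Y j) : ℝ)) hsymm hsum
  rw [step1, step2, hcov, trace_aux n d Y]
  simp only [hnorm]
  field_simp
end

section
/- Let Y, Z be nonnegative random variables with Y + Z > 0 almost surely and E[YZ/(Y+cZ)²] < ∞ for c > 0. If Y and Z are independent, then E[YZ/(Y + cZ)²] = ∫₀^∞ t · E[Y e^{−tY}] · E[Z e^{−ctZ}] dt. -/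
open MeasureTheory ProbabilityTheory

/-- `∫ t in Ioi 0, t * exp (-(a*t)) = 1/a²` for `a > 0`. -/
lemma aux_integral_t_exp {a : ℝ} (ha : 0 < a) :
    ∫ t in Set.Ioi (0 : ℝ), t * Real.exp (-(a * t)) = 1 / a ^ 2 := by
  have h := Real.integral_rpow_mul_exp_neg_mul_Ioi (a := 2) (r := a) two_pos ha
  rw [show ∫ t in Set.Ioi (0:ℝ), t * Real.exp (-(a*t))
      = ∫ t in Set.Ioi (0:ℝ), t ^ ((2:ℝ) - 1) * Real.exp (-(a * t)) from
    setIntegral_congr_fun measurableSet_Ioi (fun t ht => by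
      rw [show (2:ℝ) - 1 = 1 by norm_num, Real.rpow_one]), h, Real.Gamma_two]
  rw [mul_one, one_div, show (2:ℝ) = ((2:ℕ):ℝ) by norm_num, Real.rpow_natCast]
  rw [inv_pow, one_div]

/-- Integrability of `t * exp (-(a*t))` on `Ioi 0` for `a > 0`. -/
lemma aux_integrable_t_exp {a : ℝ} (ha : 0 < a) :
    IntegrableOn (fun t => t * Real.exp (-(a * t))) (Set.Ioi (0 : ℝ)) := by
  have h := integrableOn_rpow_mul_exp_neg_mul_rpow (s := 1) (p := 1) (b := a)
    (by norm_num) one_pos ha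
  refine h.congr_fun (fun t ht => ?_) measurableSet_Ioi
  simp [Real.rpow_one, neg_mul]

lemma aux_bound {t x : ℝ} (ht : 0 < t) (hx : 0 ≤ x) :
    x * Real.exp (-t * x) ≤ 1 / t := by
  have h1 : t * x * Real.exp (-(t * x)) ≤ 1 := by
    calc t * x * Real.exp (-(t * x)) ≤ Real.exp (t * x) * Real.exp (-(t * x)) := by
          apply mul_le_mul_of_nonneg_right _ (Real.exp_nonneg _)
          linarith [Real.add_one_le_exp (t * x)]
      _ = 1 := by rw [← Real.exp_add]; simp
  rw [div_eq_inv_mul, ← mul_le_mul_iff_right₀ ht]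
  calc t * (x * Real.exp (-t * x)) = t * x * Real.exp (-(t * x)) := by ring_nf
    _ ≤ 1 := h1
    _ = t * t⁻¹ := by field_simp
    _ ≤ t * (t⁻¹ * 1) := by simp

set_option maxHeartbeats 1000000 in
/-- Fubini-type identity: for independent nonnegative random variables `Y, Z` with
`Y + Z > 0` a.s. and integrable `YZ/(Y+cZ)²`,
`E[YZ/(Y + cZ)²] = ∫₀^∞ t E[Y e^{−tY}] E[Z e^{−ctZ}] dt`. -/
theorem expectation_ratio_eq_integral
    {Ω : Type*} [MeasurableSpace Ω] (P : Measure Ω) [IsProbabilityMeasure P]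
    (Y Z : Ω → ℝ) (c : ℝ) (hc : 0 < c)
    (hYm : Measurable Y) (hZm : Measurable Z)
    (hYnn : ∀ ω, 0 ≤ Y ω) (hZnn : ∀ ω, 0 ≤ Z ω)
    (hpos : ∀ᵐ ω ∂P, 0 < Y ω + Z ω)
    (hindep : IndepFun Y Z P)
    (hint : Integrable (fun ω => Y ω * Z ω / (Y ω + c * Z ω) ^ 2) P) :
    ∫ ω, Y ω * Z ω / (Y ω + c * Z ω) ^ 2 ∂P
      = ∫ t in Set.Ioi (0 : ℝ),
          t * (∫ ω, Y ω * Real.exp (-t * Y ω) ∂P)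
            * (∫ ω, Z ω * Real.exp (-(c * t) * Z ω) ∂P) := by
  -- notation
  set f : Ω → ℝ := fun ω => Y ω * Z ω / (Y ω + c * Z ω) ^ 2 with hf_def
  set X1 : ℝ → Ω → ℝ := fun t ω => Y ω * Real.exp (-t * Y ω) with hX1_def
  set X2 : ℝ → Ω → ℝ := fun t ω => Z ω * Real.exp (-(c * t) * Z ω) with hX2_def
  set F : Ω → ℝ → ℝ := fun ω t => t * (X1 t ω * X2 t ω) with hF_def
  set g : ℝ → ℝ := fun t => t * (∫ ω, X1 t ω ∂P) * (∫ ω, X2 t ω ∂P) with hg_def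
  -- basic facts
  have hfnn : ∀ ω, 0 ≤ f ω := fun ω =>
    div_nonneg (mul_nonneg (hYnn ω) (hZnn ω)) (sq_nonneg _)
  have hFnn : ∀ ω, ∀ t ∈ Set.Ioi (0:ℝ), 0 ≤ F ω t := by
    intro ω t ht
    exact mul_nonneg (le_of_lt ht)
      (mul_nonneg (mul_nonneg (hYnn ω) (Real.exp_nonneg _))
        (mul_nonneg (hZnn ω) (Real.exp_nonneg _)))
  have hX1m : ∀ t, Measurable (X1 t) := by
    intro t; simp only [hX1_def]; fun_prop
  have hX2m : ∀ t, Measurable (X2 t) := by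
    intro t; simp only [hX2_def]; fun_prop
  have hX1i : ∀ t, 0 < t → Integrable (X1 t) P := by
    intro t ht
    refine (integrable_const (1 / t)).mono' (hX1m t).aestronglyMeasurable ?_
    refine Filter.Eventually.of_forall fun ω => ?_
    rw [Real.norm_eq_abs, abs_of_nonneg (mul_nonneg (hYnn ω) (Real.exp_nonneg _))]
    exact aux_bound ht (hYnn ω)
  have hX2i : ∀ t, 0 < t → Integrable (X2 t) P := by
    intro t ht
    refine (integrable_const (1 / (c * t))).mono' (hX2m t).aestronglyMeasurable ?_
    refine Filter.Eventually.of_forall fun ω => ?_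
    rw [Real.norm_eq_abs, abs_of_nonneg (mul_nonneg (hZnn ω) (Real.exp_nonneg _))]
    exact aux_bound (mul_pos hc ht) (hZnn ω)
  have hindep' : ∀ t, IndepFun (X1 t) (X2 t) P := by
    intro t
    have m1 : Measurable fun y : ℝ => y * Real.exp (-t * y) := by fun_prop
    have m2 : Measurable fun z : ℝ => z * Real.exp (-(c * t) * z) := by fun_prop
    exact hindep.comp m1 m2
  -- product form of F
  have hFeq : ∀ ω t, F ω t = Y ω * Z ω * (t * Real.exp (-((Y ω + c * Z ω) * t))) := by
    intro ω t
    have : Real.exp (-t * Y ω) * Real.exp (-(c * t) * Z ω)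
        = Real.exp (-((Y ω + c * Z ω) * t)) := by
      rw [← Real.exp_add]; ring_nf
    simp only [hF_def, hX1_def, hX2_def]
    calc t * (Y ω * Real.exp (-t * Y ω) * (Z ω * Real.exp (-(c * t) * Z ω)))
        = Y ω * Z ω * (t * (Real.exp (-t * Y ω) * Real.exp (-(c * t) * Z ω))) := by ring
      _ = Y ω * Z ω * (t * Real.exp (-((Y ω + c * Z ω) * t))) := by rw [this]
  -- measurability of the big uncurried function
  have hFunc : Measurable (Function.uncurry fun ω t => ENNReal.ofReal (F ω t)) := by
    apply Measurable.ennreal_ofReal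
    simp only [hF_def, hX1_def, hX2_def, Function.uncurry]
    fun_prop
  -- LHS as lintegral
  have hL : ∫ ω, f ω ∂P = (∫⁻ ω, ENNReal.ofReal (f ω) ∂P).toReal := by
    rw [integral_eq_lintegral_of_nonneg_ae (Filter.Eventually.of_forall hfnn)
      hint.aestronglyMeasurable]
  -- a.e. pointwise identity: ofReal (f ω) = ∫⁻ t in Ioi 0, ofReal (F ω t)
  have hae : ∀ᵐ ω ∂P, ENNReal.ofReal (f ω)
      = ∫⁻ t in Set.Ioi (0:ℝ), ENNReal.ofReal (F ω t) := by
    filter_upwards [hpos] with ω hω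
    have ha : 0 < Y ω + c * Z ω := by
      rcases (hZnn ω).lt_or_eq with h | h
      · nlinarith [mul_pos hc h, hYnn ω]
      · nlinarith [hYnn ω]
    have hInt : IntegrableOn (fun t => F ω t) (Set.Ioi (0:ℝ)) := by
      have h1 : IntegrableOn
          (fun t => Y ω * Z ω * (t * Real.exp (-((Y ω + c * Z ω) * t)))) (Set.Ioi (0:ℝ)) :=
        (aux_integrable_t_exp ha).const_mul (Y ω * Z ω)
      exact h1.congr_fun (fun t _ => (hFeq ω t).symm) measurableSet_Ioi
    have hIval : ∫ t in Set.Ioi (0:ℝ), F ω t = f ω := by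
      calc ∫ t in Set.Ioi (0:ℝ), F ω t
          = ∫ t in Set.Ioi (0:ℝ), Y ω * Z ω * (t * Real.exp (-((Y ω + c * Z ω) * t))) := by
            exact setIntegral_congr_fun measurableSet_Ioi (fun t _ => hFeq ω t)
        _ = Y ω * Z ω * ∫ t in Set.Ioi (0:ℝ), t * Real.exp (-((Y ω + c * Z ω) * t)) := by
            rw [integral_const_mul]
        _ = Y ω * Z ω * (1 / (Y ω + c * Z ω) ^ 2) := by rw [aux_integral_t_exp ha]
        _ = f ω := by rw [hf_def]; ring
    rw [← hIval, ofReal_integral_eq_lintegral_ofReal hInt]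
    exact (ae_restrict_iff' measurableSet_Ioi).2 (Filter.Eventually.of_forall (hFnn ω))
  -- measurability of g
  have hgm : Measurable g := by
    have m1 : StronglyMeasurable fun t : ℝ => ∫ ω, X1 t ω ∂P := by
      apply MeasureTheory.StronglyMeasurable.integral_prod_right'
        (f := fun p : ℝ × Ω => X1 p.1 p.2)
      apply Measurable.stronglyMeasurable
      simp only [hX1_def]; fun_prop
    have m2 : StronglyMeasurable fun t : ℝ => ∫ ω, X2 t ω ∂P := by
      apply MeasureTheory.StronglyMeasurable.integral_prod_right'
        (f := fun p : ℝ × Ω => X2 p.1 p.2)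
      apply Measurable.stronglyMeasurable
      simp only [hX2_def]; fun_prop
    exact (measurable_id.mul m1.measurable).mul m2.measurable
  have hgnn : ∀ t ∈ Set.Ioi (0:ℝ), 0 ≤ g t := by
    intro t ht
    refine mul_nonneg (mul_nonneg (le_of_lt ht) ?_) ?_
    · exact integral_nonneg fun ω => mul_nonneg (hYnn ω) (Real.exp_nonneg _)
    · exact integral_nonneg fun ω => mul_nonneg (hZnn ω) (Real.exp_nonneg _)
  -- inner lintegral over Ω equals ofReal (g t)
  have hinner : ∀ t ∈ Set.Ioi (0:ℝ),
      ∫⁻ ω, ENNReal.ofReal (F ω t) ∂P = ENNReal.ofReal (g t) := by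
    intro t ht
    have hprod : Integrable (fun ω => X1 t ω * X2 t ω) P :=
      (hindep' t).integrable_mul (hX1i t ht) (hX2i t ht)
    have hFint : Integrable (fun ω => F ω t) P := by
      simpa [hF_def] using hprod.const_mul t
    rw [← ofReal_integral_eq_lintegral_ofReal hFint
      (Filter.Eventually.of_forall fun ω => hFnn ω t ht)]
    congr 1
    calc ∫ ω, F ω t ∂P = t * ∫ ω, X1 t ω * X2 t ω ∂P := by
          simp only [hF_def]; rw [integral_const_mul]
      _ = t * ((∫ ω, X1 t ω ∂P) * ∫ ω, X2 t ω ∂P) := by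
          congr 1
          exact (hindep' t).integral_fun_mul_eq_mul_integral (hX1i t ht).aestronglyMeasurable (hX2i t ht).aestronglyMeasurable
      _ = g t := by rw [hg_def]; ring
  -- RHS as lintegral
  have hR : ∫ t in Set.Ioi (0:ℝ), g t
      = (∫⁻ t in Set.Ioi (0:ℝ), ENNReal.ofReal (g t)).toReal := by
    rw [integral_eq_lintegral_of_nonneg_ae
      ((ae_restrict_iff' measurableSet_Ioi).2 (Filter.Eventually.of_forall hgnn))
      hgm.aestronglyMeasurable.restrict]
  -- Tonelli
  have hswap : ∫⁻ ω, ∫⁻ t in Set.Ioi (0:ℝ), ENNReal.ofReal (F ω t) ∂(volume) ∂P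
      = ∫⁻ t in Set.Ioi (0:ℝ), ∫⁻ ω, ENNReal.ofReal (F ω t) ∂P := by
    exact lintegral_lintegral_swap hFunc.aemeasurable
  -- conclude
  rw [hL, hR]
  congr 1
  calc ∫⁻ ω, ENNReal.ofReal (f ω) ∂P
      = ∫⁻ ω, ∫⁻ t in Set.Ioi (0:ℝ), ENNReal.ofReal (F ω t) ∂(volume) ∂P :=
        lintegral_congr_ae hae
    _ = ∫⁻ t in Set.Ioi (0:ℝ), ∫⁻ ω, ENNReal.ofReal (F ω t) ∂P := hswap
    _ = ∫⁻ t in Set.Ioi (0:ℝ), ENNReal.ofReal (g t) :=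
        setLIntegral_congr_fun_ae measurableSet_Ioi
          (Filter.Eventually.of_forall hinner)
end
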